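/- arXiv:1306.1362 — 4 statements merged into one kernel-verified Lean document; each statement's English description precedes it below -/
import Mathlib

section
/- Under the same hypotheses, (α₂² + β₂²)/(α₁² + β₁²) = (−aμ − εν + κ)/(aμ − εν + κ). -/
theorem q2_value (ε κ μ ν a n α₁ α₂ β₁ β₂ : ℝ)
    (hε1 : -1 < ε) (hε2 : ε < 1)
    (hκ : κ ^ 2 = μ ^ 2 + ν ^ 2) (ha2 : a ^ 2 = 1 - ε ^ 2)
    (hεμ : ε * μ = a * (ν + n)) (ha : 0 < a) (hμ : 0 < μ)
    (hden : a * μ - ε * ν + κ ≠ 0)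
    (hα₁ : α₁ = Real.sqrt (1 + ε) * ((κ - ν) * Real.sqrt (1 + ε) + μ * Real.sqrt (1 - ε)))
    (hα₂ : α₂ = -(Real.sqrt (1 + ε) * ((κ - ν) * Real.sqrt (1 + ε) - μ * Real.sqrt (1 - ε))))
    (hβ₁ : β₁ = Real.sqrt (1 - ε) * ((κ - ν) * Real.sqrt (1 + ε) + μ * Real.sqrt (1 - ε)))
    (hβ₂ : β₂ = Real.sqrt (1 - ε) * ((κ - ν) * Real.sqrt (1 + ε) - μ * Real.sqrt (1 - ε))) :
    (α₂ ^ 2 + β₂ ^ 2) / (α₁ ^ 2 + β₁ ^ 2) =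
      (-(a * μ) - ε * ν + κ) / (a * μ - ε * ν + κ) := by
  set s := Real.sqrt (1 + ε) with hsdef
  set t := Real.sqrt (1 - ε) with htdef
  have hs : s ^ 2 = 1 + ε := Real.sq_sqrt (by linarith)
  have ht : t ^ 2 = 1 - ε := Real.sq_sqrt (by linarith)
  have hst : s * t = a := by
    rw [hsdef, htdef, ← Real.sqrt_mul (by linarith)]
    rw [show (1 + ε) * (1 - ε) = a ^ 2 by nlinarith]
    exact Real.sqrt_sq ha.le
  have hκν : κ - ν ≠ 0 := by
    intro h
    have hκν' : κ = ν := by linarith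
    rw [hκν'] at hκ
    nlinarith [mul_pos hμ hμ]
  have h1 : α₁ ^ 2 + β₁ ^ 2 = 4 * (κ - ν) * (a * μ - ε * ν + κ) := by
    subst hα₁ hβ₁
    linear_combination (((κ - ν) * s + μ * t) ^ 2 + 2 * (κ - ν) ^ 2) * hs +
      (((κ - ν) * s + μ * t) ^ 2 + 2 * μ ^ 2) * ht + 4 * (κ - ν) * μ * hst +
      (-2) * (1 - ε) * hκ
  have h2 : α₂ ^ 2 + β₂ ^ 2 = 4 * (κ - ν) * (-(a * μ) - ε * ν + κ) := by
    subst hα₂ hβ₂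
    linear_combination (((κ - ν) * s - μ * t) ^ 2 + 2 * (κ - ν) ^ 2) * hs +
      (((κ - ν) * s - μ * t) ^ 2 + 2 * μ ^ 2) * ht - 4 * (κ - ν) * μ * hst +
      (-2) * (1 - ε) * hκ
  rw [h1, h2]
  rw [show (4 : ℝ) * (κ - ν) * (-(a * μ) - ε * ν + κ) = (4 * (κ - ν)) * (-(a * μ) - ε * ν + κ) by ring,
      show (4 : ℝ) * (κ - ν) * (a * μ - ε * ν + κ) = (4 * (κ - ν)) * (a * μ - ε * ν + κ) by ring]
  exact mul_div_mul_left _ _ (by positivity <;> simp [hκν])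
end

section
/- The generalized Laguerre polynomial y(x) = L_n^{(a)}(x) satisfies the differential equation x·y''(x) + (a + 1 − x)·y'(x) + n·y(x) = 0 for all real x. -/
lemma deriv_poly (c : ℕ → ℝ) (m : ℕ) :
    deriv (fun x : ℝ => ∑ k ∈ Finset.range m, c k * x ^ k) =
      fun x : ℝ => ∑ k ∈ Finset.range (m - 1), ((k : ℝ) + 1) * c (k + 1) * x ^ k := by
  funext x
  have h : HasDerivAt (fun x : ℝ => ∑ k ∈ Finset.range m, c k * x ^ k)
      (∑ k ∈ Finset.range m, c k * ((k : ℝ) * x ^ (k - 1))) x := by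
    apply HasDerivAt.fun_sum
    intro k _
    exact (hasDerivAt_pow k x).const_mul (c k)
  rw [h.deriv]
  cases m with
  | zero => simp
  | succ m =>
    rw [Finset.sum_range_succ']
    simp only [Nat.cast_zero, zero_mul, mul_zero, add_zero, Nat.add_sub_cancel]
    apply Finset.sum_congr rfl
    intro k _
    push_cast
    ring

lemma sum_mul_x (g G : ℕ → ℝ) (m : ℕ) (x : ℝ) (h0 : G 0 = 0)
    (hs : ∀ k, G (k + 1) = g k) (htop : g m = 0) :
    x * ∑ k ∈ Finset.range (m + 1), g k * x ^ k =
      ∑ k ∈ Finset.range (m + 1), G k * x ^ k := by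
  conv_lhs => rw [Finset.sum_range_succ]
  conv_rhs => rw [Finset.sum_range_succ']
  simp only [h0, hs, htop, zero_mul, add_zero, pow_zero]
  rw [Finset.mul_sum]
  apply Finset.sum_congr rfl
  intro k _
  ring

noncomputable def laguerreL (n : ℕ) (a x : ℝ) : ℝ :=
  ∑ k ∈ Finset.range (n + 1), (-1 : ℝ) ^ k *
    ((∏ i ∈ Finset.range (n - k), ((n : ℝ) + a - i)) / (Nat.factorial (n - k))) *
    x ^ k / (Nat.factorial k)

theorem laguerre_ode (n : ℕ) (a x : ℝ) :
    x * deriv (deriv (fun t => laguerreL n a t)) x +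
      (a + 1 - x) * deriv (fun t => laguerreL n a t) x + (n : ℝ) * laguerreL n a x = 0 := by
  set c : ℕ → ℝ := fun k =>
    if k ≤ n then (-1 : ℝ) ^ k * (∏ i ∈ Finset.range (n - k), ((n : ℝ) + a - i)) /
      ((Nat.factorial (n - k)) * (Nat.factorial k)) else 0 with hc
  have hcz : ∀ k, n < k → c k = 0 := by
    intro k hk
    simp only [hc, if_neg (Nat.not_le.mpr hk)]
  have hrep : (fun t => laguerreL n a t) =
      fun t : ℝ => ∑ k ∈ Finset.range (n + 2), c k * t ^ k := by
    funext t
    conv_rhs => rw [Finset.sum_range_succ]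
    rw [hcz (n + 1) (by omega), zero_mul, add_zero]
    unfold laguerreL
    apply Finset.sum_congr rfl
    intro k hk
    have hk' : k ≤ n := by
      have := Finset.mem_range.mp hk; omega
    simp only [hc, if_pos hk']
    ring
  have key : ∀ k : ℕ, ((k : ℝ) + 1) * ((k : ℝ) + a + 1) * c (k + 1) +
      ((n : ℝ) - (k : ℝ)) * c k = 0 := by
    intro k
    rcases lt_trichotomy k n with h | h | h
    · have hk1 : k + 1 ≤ n := h
      have hk : k ≤ n := le_of_lt h
      have hm : n - (k + 1) = n - k - 1 := by omega
      set m := n - (k + 1) with hmdef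
      have hnk : n - k = m + 1 := by omega
      simp only [hc, if_pos hk1, if_pos hk, hnk, ← hmdef]
      rw [Finset.prod_range_succ]
      have hmc : (m : ℝ) = (n : ℝ) - (k : ℝ) - 1 := by
        rw [hmdef, Nat.cast_sub hk1]
        push_cast
        ring
      have f1 : ((Nat.factorial m : ℕ) : ℝ) ≠ 0 := Nat.cast_ne_zero.mpr (Nat.factorial_ne_zero m)
      have f2 : ((Nat.factorial k : ℕ) : ℝ) ≠ 0 := Nat.cast_ne_zero.mpr (Nat.factorial_ne_zero k)
      have hn : (n : ℝ) = (m : ℝ) + (k : ℝ) + 1 := by rw [hmc]; ring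
      rw [Nat.factorial_succ m, Nat.factorial_succ k]
      push_cast
      rw [hn]
      have hk0 : ((k : ℝ) + 1) ≠ 0 := by positivity
      have hm1 : ((m : ℝ) + 1) ≠ 0 := by positivity
      rw [pow_succ]
      field_simp [f1, f2, hk0, hm1]
      ring
    · subst h
      rw [hcz (k + 1) (by omega)]
      simp
    · rw [hcz k h, hcz (k + 1) (by omega)]
      simp
  have hd1 : deriv (fun t => laguerreL n a t) =
      fun y : ℝ => ∑ k ∈ Finset.range (n + 2), ((k : ℝ) + 1) * c (k + 1) * y ^ k := by
    rw [hrep, deriv_poly]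
    funext y
    conv_rhs => rw [Finset.sum_range_succ]
    rw [show n + 2 - 1 = n + 1 from rfl, hcz (n + 1 + 1) (by omega)]
    simp
  have hd2 : deriv (deriv (fun t => laguerreL n a t)) =
      fun y : ℝ => ∑ k ∈ Finset.range (n + 2),
        ((k : ℝ) + 1) * (((k : ℝ) + 2) * c (k + 2)) * y ^ k := by
    rw [hd1, deriv_poly (fun k => ((k : ℝ) + 1) * c (k + 1)) (n + 2)]
    funext y
    conv_rhs => rw [Finset.sum_range_succ]
    rw [show n + 2 - 1 = n + 1 from rfl]
    rw [hcz (n + 1 + 2) (by omega)]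
    simp only [mul_zero, zero_mul, add_zero]
    apply Finset.sum_congr rfl
    intro k _
    push_cast
    ring
  have hrep' : laguerreL n a x = ∑ k ∈ Finset.range (n + 2), c k * x ^ k :=
    congrFun hrep x
  have hd1' : deriv (fun t => laguerreL n a t) x =
      ∑ k ∈ Finset.range (n + 2), ((k : ℝ) + 1) * c (k + 1) * x ^ k :=
    congrFun hd1 x
  have hd2' : deriv (deriv (fun t => laguerreL n a t)) x =
      ∑ k ∈ Finset.range (n + 2), ((k : ℝ) + 1) * (((k : ℝ) + 2) * c (k + 2)) * x ^ k :=
    congrFun hd2 x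
  rw [hd2', hd1', hrep']
  have hx2 : x * ∑ k ∈ Finset.range (n + 2),
      ((k : ℝ) + 1) * (((k : ℝ) + 2) * c (k + 2)) * x ^ k =
      ∑ k ∈ Finset.range (n + 2), (k : ℝ) * (((k : ℝ) + 1) * c (k + 1)) * x ^ k := by
    apply sum_mul_x
    · simp
    · intro k
      rw [show k + 1 + 1 = k + 2 from rfl]
      push_cast
      ring
    · rw [show n + 1 + 2 = n + 3 from rfl, hcz (n + 3) (by omega)]
      ring
  have hx1 : x * ∑ k ∈ Finset.range (n + 2), ((k : ℝ) + 1) * c (k + 1) * x ^ k =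
      ∑ k ∈ Finset.range (n + 2), (k : ℝ) * c k * x ^ k := by
    apply sum_mul_x
    · simp
    · intro k
      push_cast
      ring
    · rw [hcz (n + 1 + 1) (by omega)]
      ring
  have hsplit : (a + 1 - x) * ∑ k ∈ Finset.range (n + 2), ((k : ℝ) + 1) * c (k + 1) * x ^ k =
      (a + 1) * (∑ k ∈ Finset.range (n + 2), ((k : ℝ) + 1) * c (k + 1) * x ^ k) -
      x * ∑ k ∈ Finset.range (n + 2), ((k : ℝ) + 1) * c (k + 1) * x ^ k := by
    ring
  rw [hsplit, hx1, hx2, Finset.mul_sum, Finset.mul_sum]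
  rw [← Finset.sum_sub_distrib, ← Finset.sum_add_distrib, ← Finset.sum_add_distrib]
  apply Finset.sum_eq_zero
  intro k _
  linear_combination x ^ k * key k
end

section
/- Let f(r) = L_{n−1}^{(2ν)}(2aβr)² with n ≥ 1. Then f satisfies the second-order linear ODE in r: −r²·f''(r) + 2n²·L_n^{(2ν)}(2aβr)² + (6aβr² − 2nr − 6νr − r)·f'(r) + (−8a²β²r² + 4aβnr + 16aβνr + 4aβr − 8ν² − 2n² − 8νn)·f(r) = 0, i.e. the operator −r²D_r² + 2n²S_n + (6aβr² − 2nr − 6νr − r)D_r + (−8a²β²r² + 4aβ(n + 4ν + 1)r − 8ν² − 2n² − 8νn) annihilates the sequence of functions g_n(r) = L_{n−1}^{(2ν)}(2aβr)². -/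
noncomputable def g0 (α : ℝ) (m k : ℕ) : ℝ :=
  if k ≤ m then (-1:ℝ)^k * ((∏ i ∈ Finset.range (m-k), ((m:ℝ)+α-i)) / (Nat.factorial (m-k)))
    / (Nat.factorial k) else 0

lemma g0_of_gt {α : ℝ} {m k : ℕ} (h : m < k) : g0 α m k = 0 := if_neg (not_le.mpr h)

lemma laguerreL_eq (α : ℝ) (m : ℕ) (x : ℝ) :
    laguerreL m α x = ∑ k ∈ Finset.range (m+2), g0 α m k * x^k := by
  unfold laguerreL g0
  conv_rhs => rw [Finset.sum_range_succ]
  rw [if_neg (by omega : ¬ m+1 ≤ m), zero_mul, add_zero]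
  refine Finset.sum_congr rfl fun k hk => ?_
  rw [if_pos (Nat.lt_succ_iff.mp (Finset.mem_range.mp hk))]
  ring

lemma hasDerivAt_psum (f : ℕ → ℝ) (N : ℕ) (x : ℝ) :
    HasDerivAt (fun y : ℝ => ∑ k ∈ Finset.range (N+1), f k * y^k)
      (∑ k ∈ Finset.range N, ((k:ℝ)+1) * f (k+1) * x^k) x := by
  have hfe : (fun y : ℝ => ∑ k ∈ Finset.range (N+1), f k * y^k)
      = fun y => (∑ k ∈ Finset.range N, f (k+1) * y^(k+1)) + f 0 := by
    funext y
    rw [Finset.sum_range_succ']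
    simp
  rw [hfe]
  have h : HasDerivAt (fun y : ℝ => ∑ k ∈ Finset.range N, f (k+1) * y^(k+1))
      (∑ k ∈ Finset.range N, ((k:ℝ)+1) * f (k+1) * x^k) x := by
    have h2 := HasDerivAt.fun_sum (fun k (_ : k ∈ Finset.range N) =>
      ((hasDerivAt_pow (k+1) x).const_mul (f (k+1))))
    refine h2.congr_deriv ?_
    refine Finset.sum_congr rfl fun k _ => ?_
    push_cast
    ring
  simpa using h.add_const (f 0)

lemma fact1 (α : ℝ) (m k : ℕ) :
    ((k:ℝ)+1) * ((k:ℝ)+1+α) * g0 α m (k+1) = ((k:ℝ)-(m:ℝ)) * g0 α m k := by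
  unfold g0
  rcases lt_trichotomy k m with h | h | h
  · rw [if_pos (by omega : k+1 ≤ m), if_pos (le_of_lt h)]
    have h1 : m - k = (m - (k+1)) + 1 := by omega
    rw [h1, Finset.prod_range_succ, Nat.factorial_succ, Nat.factorial_succ]
    have h2 : ((m - (k+1) : ℕ) : ℝ) = (m:ℝ) - (k:ℝ) - 1 := by
      rw [Nat.cast_sub (by omega : k+1 ≤ m)]; push_cast; ring
    have hf1 : ((Nat.factorial (m - (k+1)) : ℕ) : ℝ) ≠ 0 :=
      Nat.cast_ne_zero.mpr (Nat.factorial_ne_zero _)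
    have hf2 : ((Nat.factorial k : ℕ) : ℝ) ≠ 0 :=
      Nat.cast_ne_zero.mpr (Nat.factorial_ne_zero _)
    have hk1 : ((k:ℝ)+1) ≠ 0 := by positivity
    have hmk : (m:ℝ) - (k:ℝ) ≠ 0 := by
      have : (k:ℝ) < (m:ℝ) := by exact_mod_cast h
      intro hcon; nlinarith
    push_cast
    rw [h2, show (m:ℝ)-(k:ℝ)-1+1 = (m:ℝ)-(k:ℝ) from by ring]
    obtain ⟨F1, hF1, hF1z⟩ : ∃ F1 : ℝ, ((Nat.factorial (m-(k+1)):ℕ):ℝ) = F1 ∧ F1 ≠ 0 :=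
      ⟨_, rfl, hf1⟩
    obtain ⟨F2, hF2, hF2z⟩ : ∃ F2 : ℝ, ((Nat.factorial k:ℕ):ℝ) = F2 ∧ F2 ≠ 0 :=
      ⟨_, rfl, hf2⟩
    rw [hF1, hF2]
    generalize (∏ i ∈ Finset.range (m-(k+1)), ((m:ℝ)+α-(i:ℝ))) = P
    field_simp
    ring
  · subst h
    rw [if_neg (by omega : ¬ k+1 ≤ k), if_pos (le_refl k)]
    ring
  · rw [if_neg (by omega : ¬ k+1 ≤ m), if_neg (by omega : ¬ k ≤ m)]
    ring

lemma fact2 (α : ℝ) (m k : ℕ) :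
    ((m:ℝ)+1) * g0 α (m+1) k + (if k = 0 then 0 else g0 α m (k-1))
      = ((m:ℝ)+1+α+(k:ℝ)) * g0 α m k := by
  unfold g0
  rcases k with _ | j
  · simp only [if_pos (Nat.zero_le _), if_pos rfl]
    rw [Nat.sub_zero, Nat.sub_zero, Finset.prod_range_succ', Nat.factorial_succ]
    have hp : (∏ i ∈ Finset.range m, ((↑(m+1):ℝ)+α-(↑(i+1))))
        = ∏ i ∈ Finset.range m, ((m:ℝ)+α-(i:ℝ)) :=
      Finset.prod_congr rfl fun i _ => by push_cast; ring
    rw [hp]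
    have hf1 : ((Nat.factorial m : ℕ) : ℝ) ≠ 0 :=
      Nat.cast_ne_zero.mpr (Nat.factorial_ne_zero _)
    have hm1 : ((m:ℝ)+1) ≠ 0 := by positivity
    push_cast
    obtain ⟨F1, hF1, hF1z⟩ : ∃ F1 : ℝ, ((Nat.factorial m:ℕ):ℝ) = F1 ∧ F1 ≠ 0 :=
      ⟨_, rfl, hf1⟩
    rw [hF1]
    generalize (∏ i ∈ Finset.range m, ((m:ℝ)+α-(i:ℝ))) = P
    field_simp
    ring
  · simp only [Nat.add_sub_cancel, Nat.succ_ne_zero, if_false]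
    rcases lt_trichotomy j m with h | h | h
    · rw [if_pos (by omega : j+1 ≤ m+1), if_pos (by omega : j+1 ≤ m),
        if_pos (by omega : j ≤ m)]
      have e1 : m+1-(j+1) = (m-(j+1))+1 := by omega
      have e2 : m-j = (m-(j+1))+1 := by omega
      rw [e1, e2,
        Finset.prod_range_succ (f := fun i : ℕ => (m:ℝ)+α-(i:ℝ)),
        Finset.prod_range_succ' (f := fun i : ℕ => ((m+1:ℕ):ℝ)+α-(i:ℝ)),
        Nat.factorial_succ (m-(j+1)), Nat.factorial_succ j]
      have hc : ((m - (j+1) : ℕ) : ℝ) = (m:ℝ) - (j:ℝ) - 1 := by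
        rw [Nat.cast_sub (by omega : j+1 ≤ m)]; push_cast; ring
      have hp : (∏ i ∈ Finset.range (m-(j+1)), ((↑(m+1):ℝ)+α-(↑(i+1))))
          = ∏ i ∈ Finset.range (m-(j+1)), ((m:ℝ)+α-(i:ℝ)) :=
        Finset.prod_congr rfl fun i _ => by push_cast; ring
      rw [hp]
      have hf1 : ((Nat.factorial (m-(j+1)) : ℕ) : ℝ) ≠ 0 :=
        Nat.cast_ne_zero.mpr (Nat.factorial_ne_zero _)
      have hf2 : ((Nat.factorial j : ℕ) : ℝ) ≠ 0 :=
        Nat.cast_ne_zero.mpr (Nat.factorial_ne_zero _)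
      have hj1 : ((j:ℝ)+1) ≠ 0 := by positivity
      have hjm : (m:ℝ) - (j:ℝ) ≠ 0 := by
        have : (j:ℝ) < (m:ℝ) := by exact_mod_cast h
        intro hcon; nlinarith
      push_cast
      rw [hc, show (m:ℝ)-(j:ℝ)-1+1 = (m:ℝ)-(j:ℝ) from by ring]
      obtain ⟨F1, hF1, hF1z⟩ : ∃ F1 : ℝ, ((Nat.factorial (m-(j+1)):ℕ):ℝ) = F1 ∧ F1 ≠ 0 :=
        ⟨_, rfl, hf1⟩
      obtain ⟨F2, hF2, hF2z⟩ : ∃ F2 : ℝ, ((Nat.factorial j:ℕ):ℝ) = F2 ∧ F2 ≠ 0 :=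
        ⟨_, rfl, hf2⟩
      rw [hF1, hF2]
      generalize (∏ i ∈ Finset.range (m-(j+1)), ((m:ℝ)+α-(i:ℝ))) = P
      field_simp
      ring
    · subst h
      rw [if_pos (le_refl (j+1)), if_neg (by omega : ¬ j+1 ≤ j),
        if_pos (le_refl j)]
      simp only [Nat.sub_self]
      rw [Finset.prod_range_zero, Nat.factorial_succ]
      have hf2 : ((Nat.factorial j : ℕ) : ℝ) ≠ 0 :=
        Nat.cast_ne_zero.mpr (Nat.factorial_ne_zero _)
      have hj1 : ((j:ℝ)+1) ≠ 0 := by positivity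
      push_cast
      obtain ⟨F2, hF2, hF2z⟩ : ∃ F2 : ℝ, ((Nat.factorial j:ℕ):ℝ) = F2 ∧ F2 ≠ 0 :=
        ⟨_, rfl, hf2⟩
      rw [hF2]
      field_simp
      ring
    · rw [if_neg (by omega : ¬ j+1 ≤ m+1), if_neg (by omega : ¬ j+1 ≤ m),
        if_neg (by omega : ¬ j ≤ m)]
      simp

noncomputable def lagD1 (α : ℝ) (m : ℕ) (x : ℝ) : ℝ :=
  ∑ k ∈ Finset.range (m+1), ((k:ℝ)+1) * g0 α m (k+1) * x^k

noncomputable def lagD2 (α : ℝ) (m : ℕ) (x : ℝ) : ℝ :=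
  ∑ k ∈ Finset.range m, ((k:ℝ)+1) * (((k:ℝ)+2) * g0 α m (k+2)) * x^k

lemma hasDerivAt_lag (α : ℝ) (m : ℕ) (x : ℝ) :
    HasDerivAt (fun y => laguerreL m α y) (lagD1 α m x) x := by
  have h := hasDerivAt_psum (g0 α m) (m+1) x
  have hfe : (fun y : ℝ => ∑ k ∈ Finset.range (m+1+1), g0 α m k * y^k)
      = fun y => laguerreL m α y := by
    funext y; rw [laguerreL_eq]
  rw [hfe] at h
  exact h

lemma hasDerivAt_lagD1 (α : ℝ) (m : ℕ) (x : ℝ) :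
    HasDerivAt (fun y => lagD1 α m y) (lagD2 α m x) x := by
  have h := hasDerivAt_psum (fun k => ((k:ℝ)+1) * g0 α m (k+1)) m x
  have he : lagD2 α m x = ∑ k ∈ Finset.range m,
      ((k:ℝ)+1) * ((fun k : ℕ => ((k:ℝ)+1) * g0 α m (k+1)) (k+1)) * x^k := by
    unfold lagD2
    refine Finset.sum_congr rfl fun k _ => ?_
    simp only []
    push_cast
    ring
  rw [he]
  exact h

lemma hD1_eq (α : ℝ) (m : ℕ) (x : ℝ) :
    lagD1 α m x = ∑ k ∈ Finset.range (m+2), ((k:ℝ)+1) * g0 α m (k+1) * x^k := by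
  unfold lagD1
  conv_rhs => rw [Finset.sum_range_succ]
  rw [g0_of_gt (by omega : m < m+1+1)]
  simp

lemma hxD1_eq (α : ℝ) (m : ℕ) (x : ℝ) :
    x * lagD1 α m x = ∑ k ∈ Finset.range (m+2), (k:ℝ) * g0 α m k * x^k := by
  unfold lagD1
  rw [Finset.mul_sum]
  conv_rhs => rw [Finset.sum_range_succ']
  push_cast
  rw [show ((0:ℝ) * g0 α m 0 * x^0) = 0 by ring, add_zero]
  refine Finset.sum_congr rfl fun k _ => ?_
  ring

lemma hxD2_eq (α : ℝ) (m : ℕ) (x : ℝ) :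
    x * lagD2 α m x = ∑ k ∈ Finset.range (m+2), (k:ℝ) * (((k:ℝ)+1) * g0 α m (k+1)) * x^k := by
  unfold lagD2
  conv_rhs => rw [Finset.sum_range_succ]
  rw [g0_of_gt (by omega : m < m+1+1)]
  conv_rhs => rw [Finset.sum_range_succ']
  rw [Finset.mul_sum]
  simp only [Nat.cast_zero, zero_mul, mul_zero, add_zero, Nat.cast_add, Nat.cast_one]
  refine Finset.sum_congr rfl fun k _ => ?_
  ring

lemma shift_sum (f : ℕ → ℝ) (N : ℕ) (x : ℝ) :
    x * ∑ k ∈ Finset.range N, f k * x^k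
      = ∑ k ∈ Finset.range (N+1), (if k = 0 then 0 else f (k-1)) * x^k := by
  rw [Finset.mul_sum]
  conv_rhs => rw [Finset.sum_range_succ']
  norm_num
  refine Finset.sum_congr rfl fun k _ => ?_
  ring

lemma keyI (α : ℝ) (m : ℕ) (x : ℝ) :
    x * lagD2 α m x + (α+1-x) * lagD1 α m x + (m:ℝ) * laguerreL m α x = 0 := by
  have e : (α+1-x) * lagD1 α m x = (α+1) * lagD1 α m x - x * lagD1 α m x := by ring
  have hsplit : x * lagD2 α m x + (α+1-x) * lagD1 α m x + (m:ℝ) * laguerreL m α x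
      = ∑ k ∈ Finset.range (m+2),
          ((k:ℝ) * (((k:ℝ)+1) * g0 α m (k+1)) + (α+1) * (((k:ℝ)+1) * g0 α m (k+1))
            - (k:ℝ) * g0 α m k + (m:ℝ) * g0 α m k) * x^k := by
    rw [e, hxD2_eq, hxD1_eq, hD1_eq, laguerreL_eq, Finset.mul_sum, Finset.mul_sum,
      ← Finset.sum_sub_distrib, ← Finset.sum_add_distrib, ← Finset.sum_add_distrib]
    exact Finset.sum_congr rfl fun k _ => by ring
  rw [hsplit]
  apply Finset.sum_eq_zero
  intro k _
  have h := fact1 α m k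
  linear_combination x^k * h

lemma keyII (α : ℝ) (m : ℕ) (x : ℝ) :
    ((m:ℝ)+1) * laguerreL (m+1) α x
      = ((m:ℝ)+1+α-x) * laguerreL m α x + x * lagD1 α m x := by
  have hL3 : laguerreL m α x = ∑ k ∈ Finset.range (m+3), g0 α m k * x^k := by
    rw [laguerreL_eq]
    conv_rhs => rw [Finset.sum_range_succ]
    rw [g0_of_gt (by omega : m < m+2)]
    simp
  have hxD1' : x * lagD1 α m x = ∑ k ∈ Finset.range (m+3), (k:ℝ) * g0 α m k * x^k := by
    rw [hxD1_eq]
    conv_rhs => rw [Finset.sum_range_succ]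
    rw [g0_of_gt (by omega : m < m+2)]
    simp
  have hxL : x * laguerreL m α x
      = ∑ k ∈ Finset.range (m+3), (if k = 0 then 0 else g0 α m (k-1)) * x^k := by
    rw [laguerreL_eq, shift_sum]
  have hLn : laguerreL (m+1) α x = ∑ k ∈ Finset.range (m+3), g0 α (m+1) k * x^k :=
    laguerreL_eq α (m+1) x
  have expand : ((m:ℝ)+1) * laguerreL (m+1) α x
      - (((m:ℝ)+1+α) * laguerreL m α x - x * laguerreL m α x + x * lagD1 α m x)
      = ∑ k ∈ Finset.range (m+3),
          (((m:ℝ)+1) * g0 α (m+1) k - ((((m:ℝ)+1+α) * g0 α m k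
            - (if k = 0 then 0 else g0 α m (k-1))) + (k:ℝ) * g0 α m k)) * x^k := by
    rw [hLn, hxL, hxD1', hL3, Finset.mul_sum, Finset.mul_sum,
      ← Finset.sum_sub_distrib, ← Finset.sum_add_distrib, ← Finset.sum_sub_distrib]
    exact Finset.sum_congr rfl fun k _ => by ring
  have hz : (∑ k ∈ Finset.range (m+3),
      (((m:ℝ)+1) * g0 α (m+1) k - ((((m:ℝ)+1+α) * g0 α m k
        - (if k = 0 then 0 else g0 α m (k-1))) + (k:ℝ) * g0 α m k)) * x^k) = 0 := by
    apply Finset.sum_eq_zero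
    intro k _
    have h := fact2 α m k
    linear_combination x^k * h
  linear_combination expand + hz

theorem laguerre_sq_ode (a β ν : ℝ) (n : ℕ) (hn : 1 ≤ n) (r : ℝ) :
    -r ^ 2 * deriv (deriv (fun s => laguerreL (n - 1) (2 * ν) (2 * a * β * s) ^ 2)) r +
      2 * (n : ℝ) ^ 2 * laguerreL n (2 * ν) (2 * a * β * r) ^ 2 +
      (6 * a * β * r ^ 2 - 2 * (n : ℝ) * r - 6 * ν * r - r) *
        deriv (fun s => laguerreL (n - 1) (2 * ν) (2 * a * β * s) ^ 2) r +
      (-8 * a ^ 2 * β ^ 2 * r ^ 2 + 4 * a * β * ((n : ℝ) + 4 * ν + 1) * r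
        - 8 * ν ^ 2 - 2 * (n : ℝ) ^ 2 - 8 * ν * (n : ℝ)) *
        laguerreL (n - 1) (2 * ν) (2 * a * β * r) ^ 2 = 0 := by
  obtain ⟨m, rfl⟩ : ∃ m, n = m + 1 := ⟨n - 1, by omega⟩
  simp only [Nat.add_sub_cancel]
  have hD0 : ∀ s : ℝ, HasDerivAt (fun t : ℝ => laguerreL m (2*ν) (2*a*β*t))
      (lagD1 (2*ν) m (2*a*β*s) * (2*a*β)) s := by
    intro s
    have h1 : HasDerivAt (fun t : ℝ => 2*a*β*t) (2*a*β) s := by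
      simpa using (hasDerivAt_id s).const_mul (2*a*β)
    exact (hasDerivAt_lag (2*ν) m (2*a*β*s)).comp s h1
  have hD0' : ∀ s : ℝ, HasDerivAt (fun t : ℝ => lagD1 (2*ν) m (2*a*β*t))
      (lagD2 (2*ν) m (2*a*β*s) * (2*a*β)) s := by
    intro s
    have h1 : HasDerivAt (fun t : ℝ => 2*a*β*t) (2*a*β) s := by
      simpa using (hasDerivAt_id s).const_mul (2*a*β)
    exact (hasDerivAt_lagD1 (2*ν) m (2*a*β*s)).comp s h1
  have hf1 : ∀ s : ℝ, HasDerivAt (fun t : ℝ => laguerreL m (2*ν) (2*a*β*t) ^ 2)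
      (2 * laguerreL m (2*ν) (2*a*β*s) * (lagD1 (2*ν) m (2*a*β*s) * (2*a*β))) s := by
    intro s
    have h := (hD0 s).pow 2
    norm_num at h
    exact h
  have hderiv1 : (deriv fun s : ℝ => laguerreL m (2*ν) (2*a*β*s) ^ 2)
      = fun s => 2 * laguerreL m (2*ν) (2*a*β*s) * (lagD1 (2*ν) m (2*a*β*s) * (2*a*β)) :=
    funext fun s => (hf1 s).deriv
  have hf2 : HasDerivAt
      (fun s : ℝ => 2 * laguerreL m (2*ν) (2*a*β*s) * (lagD1 (2*ν) m (2*a*β*s) * (2*a*β)))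
      (2 * (lagD1 (2*ν) m (2*a*β*r) * (2*a*β)) * (lagD1 (2*ν) m (2*a*β*r) * (2*a*β))
        + 2 * laguerreL m (2*ν) (2*a*β*r) * (lagD2 (2*ν) m (2*a*β*r) * (2*a*β) * (2*a*β))) r := by
    have h := ((hD0 r).const_mul 2).mul ((hD0' r).mul_const (2*a*β))
    exact h
  have hd2 : deriv (deriv fun s : ℝ => laguerreL m (2*ν) (2*a*β*s) ^ 2) r
      = 2 * (lagD1 (2*ν) m (2*a*β*r) * (2*a*β)) * (lagD1 (2*ν) m (2*a*β*r) * (2*a*β))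
        + 2 * laguerreL m (2*ν) (2*a*β*r) * (lagD2 (2*ν) m (2*a*β*r) * (2*a*β) * (2*a*β)) := by
    rw [hderiv1]
    exact hf2.deriv
  rw [hd2, (hf1 r).deriv]
  have key1 := keyI (2*ν) m (2*a*β*r)
  have key2 := keyII (2*ν) m (2*a*β*r)
  push_cast
  linear_combination (-(2:ℝ) * (2*a*β*r) * laguerreL m (2*ν) (2*a*β*r)) * key1
    + (2 * (((m:ℝ)+1) * laguerreL (m+1) (2*ν) (2*a*β*r)
        + (((m:ℝ)+1+2*ν-2*a*β*r) * laguerreL m (2*ν) (2*a*β*r)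
          + (2*a*β*r) * lagD1 (2*ν) m (2*a*β*r)))) * key2
end

section
/- The sequence of functions g_n(r) = L_{n−1}^{(2ν)}(2aβr)², n ≥ 1, satisfies the mixed shift-differential relation: −nr·(d/dr)g_{n+1}(r) + 2n²·g_{n+1}(r) + (−nr − 2νr)·(d/dr)g_n(r) + (4aβnr + 8aβνr − 8ν² − 2n² − 8νn)·g_n(r) = 0 for all real r. -/
noncomputable def lagC (n : ℕ) (a : ℝ) (k : ℕ) : ℝ :=
  (-1 : ℝ) ^ k * ((∏ i ∈ Finset.range (n - k), ((n : ℝ) + a - i)) / (Nat.factorial (n - k)))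
    / (Nat.factorial k)

lemma lag_eq (n : ℕ) (a x : ℝ) :
    laguerreL n a x = ∑ k ∈ Finset.range (n + 1), lagC n a k * x ^ k := by
  unfold laguerreL lagC
  exact Finset.sum_congr rfl fun k _ => by ring

lemma lag_hasDeriv (n : ℕ) (a x : ℝ) :
    HasDerivAt (fun y => laguerreL n a y)
      (∑ k ∈ Finset.range (n + 1), lagC n a k * ((k : ℝ) * x ^ (k - 1))) x := by
  have h : (fun y => laguerreL n a y) = fun y => ∑ k ∈ Finset.range (n + 1), lagC n a k * y ^ k := by
    funext y; exact lag_eq n a y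
  rw [h]
  apply HasDerivAt.fun_sum
  intro k _
  simpa using (hasDerivAt_pow k x).const_mul (lagC n a k)

lemma lag_deriv (n : ℕ) (a x : ℝ) :
    deriv (fun y => laguerreL n a y) x
      = ∑ k ∈ Finset.range (n + 1), lagC n a k * ((k : ℝ) * x ^ (k - 1)) :=
  (lag_hasDeriv n a x).deriv

lemma coefA (a : ℝ) (m k : ℕ) (hk : k ≤ m) :
    ((m : ℝ) + 1 - k) * lagC (m + 1) a k = ((m : ℝ) + 1 + a) * lagC m a k := by
  obtain ⟨j, rfl⟩ := Nat.exists_eq_add_of_le hk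
  have h1 : k + j + 1 - k = j + 1 := by omega
  have h2 : k + j - k = j := by omega
  unfold lagC
  rw [h1, h2]
  have hP : (∏ i ∈ Finset.range (j + 1), (((k + j + 1 : ℕ) : ℝ) + a - i))
      = (((k + j + 1 : ℕ) : ℝ) + a) * ∏ i ∈ Finset.range j, (((k + j : ℕ) : ℝ) + a - i) := by
    rw [Finset.prod_range_succ', mul_comm]
    congr 1
    · push_cast; ring
    exact Finset.prod_congr rfl fun i _ => by push_cast; ring
  rw [hP, Nat.factorial_succ]
  have hj : ((Nat.factorial j : ℝ)) ≠ 0 := Nat.cast_ne_zero.mpr (Nat.factorial_ne_zero j)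
  have hk' : ((Nat.factorial k : ℝ)) ≠ 0 := Nat.cast_ne_zero.mpr (Nat.factorial_ne_zero k)
  push_cast
  field_simp
  ring

lemma coefTop (a : ℝ) (m : ℕ) :
    ((m : ℝ) + 1) * lagC (m + 1) a (m + 1) = - lagC m a m := by
  unfold lagC
  simp only [Nat.sub_self, Finset.range_zero, Finset.prod_empty, Nat.factorial_zero,
    Nat.factorial_succ]
  have hm : ((Nat.factorial m : ℝ)) ≠ 0 := Nat.cast_ne_zero.mpr (Nat.factorial_ne_zero m)
  push_cast [pow_succ]
  field_simp

lemma coefC (a : ℝ) (m k : ℕ) (hk : k < m) :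
    ((k : ℝ) + 1) * lagC (m + 1) a (k + 1) + lagC m a k = ((k : ℝ) + 1) * lagC m a (k + 1) := by
  obtain ⟨j, rfl⟩ := Nat.exists_eq_add_of_le hk
  have h1 : k + 1 + j + 1 - (k + 1) = j + 1 := by omega
  have h2 : k + 1 + j - k = j + 1 := by omega
  have h3 : k + 1 + j - (k + 1) = j := by omega
  unfold lagC
  rw [h1, h2, h3]
  have hQ1 : (∏ i ∈ Finset.range (j + 1), (((k + 1 + j + 1 : ℕ) : ℝ) + a - i))
      = (((k + 1 + j + 1 : ℕ) : ℝ) + a) * ∏ i ∈ Finset.range j, (((k + 1 + j : ℕ) : ℝ) + a - i) := by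
    rw [Finset.prod_range_succ', mul_comm]
    congr 1
    · push_cast; ring
    exact Finset.prod_congr rfl fun i _ => by push_cast; ring
  have hQ2 : (∏ i ∈ Finset.range (j + 1), (((k + 1 + j : ℕ) : ℝ) + a - i))
      = (∏ i ∈ Finset.range j, (((k + 1 + j : ℕ) : ℝ) + a - i)) * ((k : ℝ) + 1 + a) := by
    rw [Finset.prod_range_succ]
    congr 1
    push_cast; ring
  rw [hQ1, hQ2, Nat.factorial_succ j, Nat.factorial_succ k]
  have hj : ((Nat.factorial j : ℝ)) ≠ 0 := Nat.cast_ne_zero.mpr (Nat.factorial_ne_zero j)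
  have hk' : ((Nat.factorial k : ℝ)) ≠ 0 := Nat.cast_ne_zero.mpr (Nat.factorial_ne_zero k)
  push_cast [pow_succ]
  field_simp
  ring

lemma pow_helper (k : ℕ) (x : ℝ) : x * ((k : ℝ) * x ^ (k - 1)) = (k : ℝ) * x ^ k := by
  cases k with
  | zero => simp
  | succ k => simp only [Nat.add_sub_cancel, pow_succ]; push_cast; ring

lemma lagA (a : ℝ) (m : ℕ) (x : ℝ) :
    x * deriv (fun y => laguerreL (m + 1) a y) x
      = ((m : ℝ) + 1) * laguerreL (m + 1) a x - ((m : ℝ) + 1 + a) * laguerreL m a x := by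
  rw [lag_deriv, lag_eq, lag_eq, Finset.mul_sum, Finset.mul_sum, Finset.mul_sum]
  have h3 : ∑ k ∈ Finset.range (m + 1), ((m : ℝ) + 1 + a) * (lagC m a k * x ^ k)
      = ∑ k ∈ Finset.range (m + 1), ((m : ℝ) + 1 - k) * lagC (m + 1) a k * x ^ k := by
    refine Finset.sum_congr rfl fun k hk => ?_
    linear_combination (-(x ^ k)) * coefA a m k (Finset.mem_range_succ_iff.mp hk)
  rw [h3]
  have h4 : ∑ k ∈ Finset.range (m + 1), ((m : ℝ) + 1 - k) * lagC (m + 1) a k * x ^ k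
      = ∑ k ∈ Finset.range (m + 2), ((m : ℝ) + 1 - k) * lagC (m + 1) a k * x ^ k := by
    rw [Finset.sum_range_succ _ (m + 1)]
    have h0 : ((m : ℝ) + 1 - ((m + 1 : ℕ) : ℝ)) = 0 := by push_cast; ring
    rw [h0, zero_mul, zero_mul, add_zero]
  rw [h4, ← Finset.sum_sub_distrib]
  refine Finset.sum_congr rfl fun k _ => ?_
  rw [mul_comm (lagC (m + 1) a k), ← mul_assoc, pow_helper]
  ring

lemma lagDD (a : ℝ) (m : ℕ) (x : ℝ) :
    deriv (fun y => laguerreL (m + 1) a y) x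
      = deriv (fun y => laguerreL m a y) x - laguerreL m a x := by
  rw [lag_deriv, lag_deriv, lag_eq]
  have e1 : ∑ k ∈ Finset.range (m + 1 + 1), lagC (m + 1) a k * ((k : ℝ) * x ^ (k - 1))
      = ∑ k ∈ Finset.range (m + 1), lagC (m + 1) a (k + 1) * (((k : ℝ) + 1) * x ^ k) := by
    rw [Finset.sum_range_succ']
    simp only [Nat.cast_zero, zero_mul, mul_zero, add_zero, Nat.add_sub_cancel]
    exact Finset.sum_congr rfl fun k _ => by push_cast; ring_nf
  have e2 : ∑ k ∈ Finset.range (m + 1), lagC m a k * ((k : ℝ) * x ^ (k - 1))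
      = ∑ k ∈ Finset.range m, lagC m a (k + 1) * (((k : ℝ) + 1) * x ^ k) := by
    rw [Finset.sum_range_succ']
    simp only [Nat.cast_zero, zero_mul, mul_zero, add_zero, Nat.add_sub_cancel]
    exact Finset.sum_congr rfl fun k _ => by push_cast; ring_nf
  rw [e1, e2, Finset.sum_range_succ, Finset.sum_range_succ _ m]
  have htop : lagC (m + 1) a (m + 1) * (((m : ℝ) + 1) * x ^ m)
      = - (lagC m a m * x ^ m) := by
    linear_combination x ^ m * coefTop a m
  have hterm : ∀ k ∈ Finset.range m,
      lagC (m + 1) a (k + 1) * (((k : ℝ) + 1) * x ^ k)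
        = lagC m a (k + 1) * (((k : ℝ) + 1) * x ^ k) - lagC m a k * x ^ k := by
    intro k hk
    linear_combination x ^ k * coefC a m k (Finset.mem_range.mp hk)
  rw [Finset.sum_congr rfl hterm, Finset.sum_sub_distrib, htop]
  ring

lemma lagB (a : ℝ) (m : ℕ) (x : ℝ) :
    x * deriv (fun y => laguerreL m a y) x
      = ((m : ℝ) + 1) * laguerreL (m + 1) a x
        + (x - ((m : ℝ) + 1) - a) * laguerreL m a x := by
  have h := lagDD a m x
  have h2 := lagA a m x
  linear_combination h2 - x * h

theorem laguerre_sq_mixed (a β ν : ℝ) (n : ℕ) (hn : 1 ≤ n) (r : ℝ) :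
    -(n : ℝ) * r * deriv (fun s => laguerreL n (2 * ν) (2 * a * β * s) ^ 2) r +
      2 * (n : ℝ) ^ 2 * laguerreL n (2 * ν) (2 * a * β * r) ^ 2 +
      (-(n : ℝ) * r - 2 * ν * r) *
        deriv (fun s => laguerreL (n - 1) (2 * ν) (2 * a * β * s) ^ 2) r +
      (4 * a * β * (n : ℝ) * r + 8 * a * β * ν * r - 8 * ν ^ 2 - 2 * (n : ℝ) ^ 2
        - 8 * ν * (n : ℝ)) * laguerreL (n - 1) (2 * ν) (2 * a * β * r) ^ 2 = 0 := by
  obtain ⟨m, rfl⟩ : ∃ m, n = m + 1 := ⟨n - 1, by omega⟩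
  simp only [Nat.add_sub_cancel]
  have hc : HasDerivAt (fun s : ℝ => 2 * a * β * s) (2 * a * β) r := by
    simpa using (hasDerivAt_id r).const_mul (2 * a * β)
  have hL1 := lag_hasDeriv (m + 1) (2 * ν) (2 * a * β * r)
  rw [← lag_deriv] at hL1
  have hL0 := lag_hasDeriv m (2 * ν) (2 * a * β * r)
  rw [← lag_deriv] at hL0
  have hd1 : deriv (fun s => laguerreL (m + 1) (2 * ν) (2 * a * β * s) ^ 2) r
      = 2 * laguerreL (m + 1) (2 * ν) (2 * a * β * r) *
          (deriv (fun y => laguerreL (m + 1) (2 * ν) y) (2 * a * β * r) * (2 * a * β)) := by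
    have := ((hL1.comp r hc).fun_pow 2).deriv
    simpa [Function.comp] using this
  have hd0 : deriv (fun s => laguerreL m (2 * ν) (2 * a * β * s) ^ 2) r
      = 2 * laguerreL m (2 * ν) (2 * a * β * r) *
          (deriv (fun y => laguerreL m (2 * ν) y) (2 * a * β * r) * (2 * a * β)) := by
    have := ((hL0.comp r hc).fun_pow 2).deriv
    simpa [Function.comp] using this
  rw [hd1, hd0]
  have hA := lagA (2 * ν) m (2 * a * β * r)
  have hB := lagB (2 * ν) m (2 * a * β * r)
  push_cast
  linear_combination (-2 * ((m : ℝ) + 1) * laguerreL (m + 1) (2 * ν) (2 * a * β * r)) * hA +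
    (-2 * ((m : ℝ) + 1 + 2 * ν) * laguerreL m (2 * ν) (2 * a * β * r)) * hB
end
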